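/- arXiv:0707.3303 — 3 statements merged into one kernel-verified Lean document; each statement's English description precedes it below -/
import Mathlib

section
/- For vectors ξ, η in a Hilbert C*-module H, the operator norm of the rank-one operator θ_{ξ,η} equals ‖ξ⟨η,η⟩^{1/2}‖, which also equals ‖⟨ξ,ξ⟩^{1/2}⟨η,η⟩^{1/2}‖. -/
open scoped RightActions

/-- The December 2024 Mathlib `CStarModule` (right `A`-module via `SMul Aᵐᵒᵖ E`), restated
because Mathlib's `CStarModule` is now a left module. -/
class RightCStarModule (A E : Type*) [NonUnitalSemiring A] [StarRing A] [Module ℂ A]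
    [AddCommGroup E] [Module ℂ E] [PartialOrder A] [SMul Aᵐᵒᵖ E] [Norm A] [Norm E]
    extends Inner A E where
  inner_add_right {x} {y} {z} : inner x (y + z) = inner x y + inner x z
  inner_self_nonneg {x} : 0 ≤ inner x x
  inner_self {x} : inner x x = 0 ↔ x = 0
  inner_op_smul_right {a : A} {x y : E} : inner x (y <• a) = inner x y * a
  inner_smul_right_complex {z : ℂ} {x} {y} : inner x (z • y) = z • inner x y
  star_inner x y : star (inner x y) = inner y x
  norm_eq_sqrt_norm_inner_self x : ‖x‖ = √‖inner x x‖

variable {A E : Type*} [NonUnitalCStarAlgebra A] [PartialOrder A] [StarOrderedRing A]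
  [AddCommGroup E] [Module ℂ E] [SMul Aᵐᵒᵖ E] [Norm E] [RightCStarModule A E]

/-- The rank-one operator `θ_{ξ,η} : ζ ↦ ξ⟨η,ζ⟩` on a Hilbert C*-module. -/
def rankOne (ξ η : E) : E → E := fun ζ => ξ <• (inner (𝕜 := A) η ζ)

/-- The operator norm of `θ_{ξ,η}`: the supremum of `‖θ_{ξ,η} ζ‖` over `‖ζ‖ ≤ 1`. -/
noncomputable def rankOneNorm (ξ η : E) : ℝ :=
  sSup {r : ℝ | ∃ ζ : E, ‖ζ‖ ≤ 1 ∧ r = ‖rankOne (A := A) ξ η ζ‖}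

attribute [simp] RightCStarModule.inner_add_right RightCStarModule.star_inner
  RightCStarModule.inner_op_smul_right RightCStarModule.inner_smul_right_complex

namespace RightCStarModule

lemma inner_add_left {x y z : E} :
    inner (𝕜 := A) (x + y) z = inner (𝕜 := A) x z + inner (𝕜 := A) y z := by
  rw [← star_inner (A := A) z (x + y), inner_add_right, star_add, star_inner, star_inner]

lemma inner_op_smul_left {a : A} {x y : E} :
    inner (𝕜 := A) (x <• a) y = star a * inner (𝕜 := A) x y := by
  rw [← star_inner (A := A) y (x <• a), inner_op_smul_right, star_mul, star_inner]

/-- `inner x ·` as an additive map. -/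
def innerAddHomR (x : E) : E →+ A :=
  AddMonoidHom.mk' (fun y => inner (𝕜 := A) x y) (fun _ _ => inner_add_right)

/-- `inner · y` as an additive map. -/
def innerAddHomL (y : E) : E →+ A :=
  AddMonoidHom.mk' (fun x => inner (𝕜 := A) x y) (fun _ _ => inner_add_left)

@[simp]
lemma inner_zero_right {x : E} : inner (𝕜 := A) x (0 : E) = 0 :=
  map_zero (innerAddHomR (A := A) x)

@[simp]
lemma inner_zero_left {x : E} : inner (𝕜 := A) (0 : E) x = 0 :=
  map_zero (innerAddHomL (A := A) x)

lemma inner_sub_right {x y z : E} :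
    inner (𝕜 := A) x (y - z) = inner (𝕜 := A) x y - inner (𝕜 := A) x z :=
  map_sub (innerAddHomR (A := A) x) y z

lemma inner_sub_left {x y z : E} :
    inner (𝕜 := A) (x - y) z = inner (𝕜 := A) x z - inner (𝕜 := A) y z :=
  map_sub (innerAddHomL (A := A) z) x y

lemma inner_smul_right_real {r : ℝ} {x y : E} :
    inner (𝕜 := A) x (r • y) = r • inner (𝕜 := A) x y := by
  have h₁ : r • y = (r : ℂ) • y := by simp
  rw [h₁, inner_smul_right_complex]
  simp

lemma inner_smul_left_real {r : ℝ} {x y : E} :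
    inner (𝕜 := A) (r • x) y = r • inner (𝕜 := A) x y := by
  rw [← star_inner (A := A) y (r • x), inner_smul_right_real, star_smul, star_trivial,
    star_inner]

lemma norm_sq_eq {x : E} : ‖x‖ ^ 2 = ‖inner (𝕜 := A) x x‖ := by
  rw [norm_eq_sqrt_norm_inner_self (A := A) x, Real.sq_sqrt (norm_nonneg _)]

protected lemma norm_nonneg {A E : Type*} [NonUnitalCStarAlgebra A] [PartialOrder A] [AddCommGroup E]
    [Module ℂ E] [SMul Aᵐᵒᵖ E] [Norm E] [RightCStarModule A E] {x : E} : 0 ≤ ‖x‖ := by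
  rw [norm_eq_sqrt_norm_inner_self (A := A) x]
  exact Real.sqrt_nonneg _

protected lemma norm_zero {A E : Type*} [NonUnitalCStarAlgebra A] [PartialOrder A]
    [StarOrderedRing A] [AddCommGroup E]
    [Module ℂ E] [SMul Aᵐᵒᵖ E] [Norm E] [RightCStarModule A E] : ‖(0 : E)‖ = 0 := by
  rw [norm_eq_sqrt_norm_inner_self (A := A), inner_zero_left, norm_zero, Real.sqrt_zero]

protected lemma norm_pos {A E : Type*} [NonUnitalCStarAlgebra A] [PartialOrder A] [AddCommGroup E]
    [Module ℂ E] [SMul Aᵐᵒᵖ E] [Norm E] [RightCStarModule A E] {x : E} (hx : x ≠ 0) : 0 < ‖x‖ := by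
  rw [norm_eq_sqrt_norm_inner_self (A := A)]
  exact Real.sqrt_pos.mpr (norm_pos_iff.mpr (fun H => hx ((inner_self (A := A)).mp H)))

lemma inner_mul_inner_swap_le {x y : E} :
    inner (𝕜 := A) y x * inner (𝕜 := A) x y ≤ ‖x‖ ^ 2 • inner (𝕜 := A) y y := by
  rcases eq_or_ne x 0 with h | h
  · simp [h, RightCStarModule.norm_zero (A := A) (E := E)]
  · have h₁ : ∀ (a : A),
        (0 : A) ≤ ‖x‖ ^ 2 • (star a * a) - ‖x‖ ^ 2 • (star a * inner (𝕜 := A) x y)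
                  - ‖x‖ ^ 2 • (inner (𝕜 := A) y x * a)
                  + ‖x‖ ^ 2 • (‖x‖ ^ 2 • inner (𝕜 := A) y y) := fun a => by
      calc (0 : A) ≤ inner (𝕜 := A) (x <• a - ‖x‖ ^ 2 • y) (x <• a - ‖x‖ ^ 2 • y) := by
                      exact inner_self_nonneg
            _ = star a * inner (𝕜 := A) x x * a - ‖x‖ ^ 2 • (star a * inner (𝕜 := A) x y)
                  - ‖x‖ ^ 2 • (inner (𝕜 := A) y x * a)
                  + ‖x‖ ^ 2 • (‖x‖ ^ 2 • inner (𝕜 := A) y y) := by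
                      simp only [inner_sub_right, inner_op_smul_right, inner_sub_left,
                        inner_op_smul_left, inner_smul_left_real, mul_sub, mul_smul_comm,
                        inner_smul_right_real, smul_sub, mul_assoc, smul_mul_assoc, sub_mul]
                      abel
            _ ≤ ‖x‖ ^ 2 • (star a * a) - ‖x‖ ^ 2 • (star a * inner (𝕜 := A) x y)
                  - ‖x‖ ^ 2 • (inner (𝕜 := A) y x * a)
                  + ‖x‖ ^ 2 • (‖x‖ ^ 2 • inner (𝕜 := A) y y) := by
                      gcongr
                      calc _ ≤ ‖inner (𝕜 := A) x x‖ • (star a * a) :=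
                          CStarAlgebra.star_left_conjugate_le_norm_smul (hb := star_inner (A := A) x x)
                        _ = ‖x‖ ^ 2 • (star a * a) := by rw [norm_sq_eq (A := A)]
    specialize h₁ (inner (𝕜 := A) x y)
    simp only [star_inner, sub_self, zero_sub, le_neg_add_iff_add_le, add_zero] at h₁
    rwa [smul_le_smul_iff_of_pos_left (pow_pos (RightCStarModule.norm_pos (A := A) h) _)] at h₁

end RightCStarModule

open scoped NNReal

private lemma norm_op_smul' (ξ : E) (a : A) :
    ‖ξ <• a‖ = ‖CFC.sqrt (inner (𝕜 := A) ξ ξ) * a‖ := by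
  set T := CFC.sqrt (inner (𝕜 := A) ξ ξ) with hT
  have hTT : T * T = inner (𝕜 := A) ξ ξ :=
    CFC.sqrt_mul_sqrt_self _ RightCStarModule.inner_self_nonneg
  have hTs : star T = T := (IsSelfAdjoint.of_nonneg (CFC.sqrt_nonneg _)).star_eq
  have h1 : ‖ξ <• a‖ ^ 2 = ‖T * a‖ ^ 2 := by
    rw [RightCStarModule.norm_sq_eq (A := A)]
    have h2 : inner (𝕜 := A) (ξ <• a) (ξ <• a) = star (T * a) * (T * a) := by
      rw [star_mul, hTs]
      simp only [RightCStarModule.inner_op_smul_left, RightCStarModule.inner_op_smul_right, ← hTT]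
      noncomm_ring
    rw [h2, CStarRing.norm_star_mul_self, sq]
  have h3 := congrArg Real.sqrt h1
  rwa [Real.sqrt_sq (RightCStarModule.norm_nonneg (A := A)), Real.sqrt_sq (norm_nonneg _)] at h3

private lemma key_upper' (ξ η ζ : E) (hζ : ‖ζ‖ ≤ 1) :
    ‖CFC.sqrt (inner (𝕜 := A) ξ ξ) * (inner (𝕜 := A) η ζ)‖
      ≤ ‖CFC.sqrt (inner (𝕜 := A) ξ ξ) * CFC.sqrt (inner (𝕜 := A) η η)‖ := by
  set T := CFC.sqrt (inner (𝕜 := A) ξ ξ) with hT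
  set s := CFC.sqrt (inner (𝕜 := A) η η) with hs
  set b := inner (𝕜 := A) η ζ with hb
  have hTs : star T = T := (IsSelfAdjoint.of_nonneg (CFC.sqrt_nonneg _)).star_eq
  have hss : star s = s := (IsSelfAdjoint.of_nonneg (CFC.sqrt_nonneg _)).star_eq
  have hssh : s * s = inner (𝕜 := A) η η :=
    CFC.sqrt_mul_sqrt_self _ RightCStarModule.inner_self_nonneg
  have hsq : ‖T * b‖ ^ 2 ≤ ‖T * s‖ ^ 2 := by
    have e1 : ‖T * b‖ ^ 2 = ‖T * (b * star b) * T‖ := by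
      rw [sq, ← CStarRing.norm_self_mul_star, star_mul, hTs]
      congr 1; noncomm_ring
    have hle1 : b * star b ≤ ‖ζ‖ ^ 2 • inner (𝕜 := A) η η := by
      simpa [hb] using RightCStarModule.inner_mul_inner_swap_le (x := ζ) (y := η)
    have hle2 : T * (b * star b) * T ≤ T * (‖ζ‖ ^ 2 • inner (𝕜 := A) η η) * T := by
      have := star_left_conjugate_le_conjugate hle1 T
      rwa [hTs] at this
    have hpos : 0 ≤ T * (b * star b) * T := by
      have := star_left_conjugate_nonneg (mul_star_self_nonneg b) T
      rwa [hTs] at this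
    have hζ2 : ‖ζ‖ ^ 2 ≤ 1 := by
      have := RightCStarModule.norm_nonneg (A := A) (x := ζ)
      nlinarith
    calc ‖T * b‖ ^ 2 = ‖T * (b * star b) * T‖ := e1
      _ ≤ ‖T * (‖ζ‖ ^ 2 • inner (𝕜 := A) η η) * T‖ :=
          CStarAlgebra.norm_le_norm_of_nonneg_of_le hpos hle2
      _ = ‖ζ‖ ^ 2 * ‖T * inner (𝕜 := A) η η * T‖ := by
          rw [mul_smul_comm, smul_mul_assoc, norm_smul]
          simp [abs_of_nonneg (by positivity : (0:ℝ) ≤ ‖ζ‖ ^ 2)]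
      _ ≤ 1 * ‖T * inner (𝕜 := A) η η * T‖ := by
          gcongr
      _ = ‖(T * s) * star (T * s)‖ := by
          rw [one_mul, ← hssh, star_mul, hss, hTs]; noncomm_ring
      _ = ‖T * s‖ ^ 2 := by rw [CStarRing.norm_self_mul_star, sq]
  have h3 := Real.sqrt_le_sqrt hsq
  rwa [Real.sqrt_sq (norm_nonneg _), Real.sqrt_sq (norm_nonneg _)] at h3

private lemma key_lower' (ξ η : E) {ε : ℝ≥0} (hε : 0 < ε) :
    ∃ ζ : E, ‖ζ‖ ≤ 1 ∧
      ‖ξ <• CFC.sqrt (inner (𝕜 := A) η η)‖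
        ≤ ‖ξ <• (inner (𝕜 := A) η ζ)‖
          + ‖CFC.sqrt (inner (𝕜 := A) ξ ξ)‖ * NNReal.sqrt ε := by
  set h := inner (𝕜 := A) η η with hh
  have hh0 : 0 ≤ h := RightCStarModule.inner_self_nonneg
  set g : ℝ≥0 → ℝ≥0 := fun t => NNReal.sqrt t / (t + ε) with hg
  have hgc : Continuous g := by
    apply Continuous.div (by fun_prop) (by fun_prop)
    intro t; positivity
  have hg0 : g 0 = 0 := by simp [hg]
  refine ⟨η <• cfcₙ g h, ?_, ?_⟩
  · -- norm bound
    have hζζ : inner (𝕜 := A) (η <• cfcₙ g h) (η <• cfcₙ g h)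
        = cfcₙ (fun t => g t * t * g t) h := by
      rw [RightCStarModule.inner_op_smul_right, RightCStarModule.inner_op_smul_left]
      have hstar : star (cfcₙ g h) = cfcₙ g h :=
        (IsSelfAdjoint.of_nonneg (cfcₙ_predicate _ _)).star_eq
      rw [hstar, cfcₙ_mul _ _ h (by fun_prop) (by simp [hg0]) (hgc.continuousOn),
        cfcₙ_mul _ _ h (hgc.continuousOn) hg0 (by fun_prop), cfcₙ_id' ℝ≥0 h, ← hh]
    have hb1 : ‖cfcₙ (fun t => g t * t * g t) h‖₊ ≤ 1 := by
      apply nnnorm_cfcₙ_nnreal_le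
      intro t ht
      have hc : t + ε ≠ 0 := by positivity
      have : g t * t * g t = (t * t) / ((t + ε) * (t + ε)) := by
        rw [hg]
        rw [div_mul_eq_mul_div, div_mul_div_comm]
        congr 1
        calc NNReal.sqrt t * t * NNReal.sqrt t
            = NNReal.sqrt t * NNReal.sqrt t * t := by ring
          _ = t * t := by rw [NNReal.mul_self_sqrt]
      rw [this]
      exact div_le_one_of_le₀ (mul_le_mul' le_self_add le_self_add) zero_le
    have : ‖η <• cfcₙ g h‖ ^ 2 ≤ 1 := by
      rw [RightCStarModule.norm_sq_eq (A := A), hζζ, ← coe_nnnorm]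
      exact_mod_cast hb1
    nlinarith [RightCStarModule.norm_nonneg (A := A) (x := η <• cfcₙ g h), this]
  · -- main estimate
    set T := CFC.sqrt (inner (𝕜 := A) ξ ξ) with hT
    set d : ℝ≥0 → ℝ≥0 := fun t => NNReal.sqrt t * ε / (t + ε) with hd
    have hdc : Continuous d := by
      apply Continuous.div (by fun_prop) (by fun_prop)
      intro t; positivity
    have hd0 : d 0 = 0 := by simp [hd]
    have hbb : inner (𝕜 := A) η (η <• cfcₙ g h) = cfcₙ (fun t => t * g t) h := by
      rw [RightCStarModule.inner_op_smul_right,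
        cfcₙ_mul _ _ h (by fun_prop) (by simp) (hgc.continuousOn), cfcₙ_id' ℝ≥0 h, ← hh]
    have hdec : CFC.sqrt h = cfcₙ (fun t => t * g t) h + cfcₙ d h := by
      rw [← cfcₙ_add (fun t : ℝ≥0 => t * g t) d h ((continuous_id.mul hgc).continuousOn)
        (by simp [hg0]) (hdc.continuousOn) hd0]
      apply cfcₙ_congr
      intro t ht
      have hc : t + ε ≠ 0 := by positivity
      simp only [hg, hd]
      field_simp
    have hdnorm : ‖cfcₙ d h‖ ≤ (NNReal.sqrt ε : ℝ) := by
      rw [← coe_nnnorm]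
      have : ‖cfcₙ d h‖₊ ≤ NNReal.sqrt ε := by
        apply nnnorm_cfcₙ_nnreal_le
        intro t ht
        have hc : t + ε ≠ 0 := by positivity
        rw [hd, div_le_iff₀ (by positivity : (0:ℝ≥0) < t + ε)]
        calc NNReal.sqrt t * ε = (NNReal.sqrt t * NNReal.sqrt ε) * NNReal.sqrt ε := by
              rw [mul_assoc, NNReal.mul_self_sqrt]
          _ ≤ (t + ε) * NNReal.sqrt ε := by
              gcongr
              rw [← NNReal.sqrt_mul]
              calc NNReal.sqrt (t * ε) ≤ NNReal.sqrt ((t + ε) * (t + ε)) :=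
                    NNReal.sqrt_le_sqrt.mpr (mul_le_mul' le_self_add le_add_self)
                _ = t + ε := NNReal.sqrt_mul_self _
          _ = NNReal.sqrt ε * (t + ε) := mul_comm _ _
      exact_mod_cast this
    calc ‖ξ <• CFC.sqrt h‖ = ‖T * CFC.sqrt h‖ := norm_op_smul' ξ _
      _ = ‖T * inner (𝕜 := A) η (η <• cfcₙ g h) + T * cfcₙ d h‖ := by
          rw [hdec, hbb, mul_add]
      _ ≤ ‖T * inner (𝕜 := A) η (η <• cfcₙ g h)‖ + ‖T * cfcₙ d h‖ := norm_add_le _ _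
      _ ≤ ‖T * inner (𝕜 := A) η (η <• cfcₙ g h)‖ + ‖T‖ * ‖cfcₙ d h‖ := by
          gcongr; exact norm_mul_le _ _
      _ ≤ ‖ξ <• inner (𝕜 := A) η (η <• cfcₙ g h)‖ + ‖T‖ * (NNReal.sqrt ε : ℝ) := by
          rw [norm_op_smul' ξ _]
          gcongr

/-- `‖θ_{ξ,η}‖ = ‖ξ⟨η,η⟩^{1/2}‖ = ‖⟨ξ,ξ⟩^{1/2}⟨η,η⟩^{1/2}‖`. -/
theorem rankOneNorm_eq (ξ η : E) :
    rankOneNorm (A := A) ξ η = ‖ξ <• CFC.sqrt (inner (𝕜 := A) η η)‖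
      ∧ rankOneNorm (A := A) ξ η
        = ‖CFC.sqrt (inner (𝕜 := A) ξ ξ) * CFC.sqrt (inner (𝕜 := A) η η)‖ := by
  have key2 : ‖ξ <• CFC.sqrt (inner (𝕜 := A) η η)‖
      = ‖CFC.sqrt (inner (𝕜 := A) ξ ξ) * CFC.sqrt (inner (𝕜 := A) η η)‖ := norm_op_smul' ξ _
  suffices hmain : rankOneNorm (A := A) ξ η = ‖ξ <• CFC.sqrt (inner (𝕜 := A) η η)‖ from
    ⟨hmain, hmain.trans key2⟩
  set S := {r : ℝ | ∃ ζ : E, ‖ζ‖ ≤ 1 ∧ r = ‖rankOne (A := A) ξ η ζ‖} with hS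
  set M := ‖ξ <• CFC.sqrt (inner (𝕜 := A) η η)‖ with hM
  have hub : ∀ r ∈ S, r ≤ M := by
    rintro r ⟨ζ, hζ, rfl⟩
    show ‖ξ <• (inner (𝕜 := A) η ζ)‖ ≤ M
    rw [hM, norm_op_smul' ξ, norm_op_smul' ξ]
    exact key_upper' ξ η ζ hζ
  have hne : S.Nonempty :=
    ⟨_, 0, by rw [RightCStarModule.norm_zero (A := A)]; norm_num, rfl⟩
  have hbdd : BddAbove S := ⟨M, hub⟩
  refine le_antisymm (csSup_le hne hub) ?_
  apply le_of_forall_pos_le_add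
  intro δ hδ
  set c := ‖CFC.sqrt (inner (𝕜 := A) ξ ξ)‖ with hc
  have hc1 : (0:ℝ) < c + 1 := by positivity
  set ε : ℝ≥0 := (Real.toNNReal (δ / (c + 1))) ^ 2 with hε
  have hεpos : 0 < ε := pow_pos (Real.toNNReal_pos.mpr (by positivity)) 2
  obtain ⟨ζ, hζ, hest⟩ := key_lower' (A := A) ξ η hεpos
  have hsqrt : (NNReal.sqrt ε : ℝ) = δ / (c + 1) := by
    rw [hε, NNReal.sqrt_sq]
    exact Real.coe_toNNReal _ (by positivity)
  have hmem : ‖ξ <• inner (𝕜 := A) η ζ‖ ∈ S := ⟨ζ, hζ, rfl⟩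
  have hle1 : ‖ξ <• inner (𝕜 := A) η ζ‖ ≤ sSup S := le_csSup hbdd hmem
  have hle2 : c * (δ / (c + 1)) ≤ δ := by
    rw [mul_div_assoc']
    rw [div_le_iff₀ hc1]
    nlinarith [hδ, norm_nonneg (CFC.sqrt (inner (𝕜 := A) ξ ξ))]
  calc M ≤ ‖ξ <• inner (𝕜 := A) η ζ‖ + c * (NNReal.sqrt ε : ℝ) := hest
    _ = ‖ξ <• inner (𝕜 := A) η ζ‖ + c * (δ / (c + 1)) := by rw [hsqrt]
    _ ≤ sSup S + δ := add_le_add hle1 hle2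
end

section
/- Two operator-valued frames {A_j} and {B_j} (with range projections of all A_j, B_j under a common projection E₀) are right-similar, i.e., B_j = A_jT for an invertible T ∈ M(A⊗K), if and only if their frame projections coincide: P_A = P_B, where P_A = θ_A D_A^{−1}θ_A*. Moreover in that case T = D_A^{−1}θ_A*θ_B is uniquely determined. -/
open scoped MultiplierAlgebra
open Filter Topology
open scoped Classical

set_option synthInstance.maxHeartbeats 1000000
set_option maxHeartbeats 1000000

variable {B : Type*} [NonUnitalCStarAlgebra B]

/-- The net of finite partial sums of the family `g` converges to `T` in the strict topology of
the multiplier algebra `𝓜(ℂ, B)`. -/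
def HasStrictSum {J : Type*} (g : J → 𝓜(ℂ, B)) (T : 𝓜(ℂ, B)) : Prop :=
  ∀ b : B,
    Tendsto (fun F : Finset J => ((∑ j ∈ F, g j) - T) * (b : 𝓜(ℂ, B))) atTop (𝓝 0) ∧
    Tendsto (fun F : Finset J => (b : 𝓜(ℂ, B)) * ((∑ j ∈ F, g j) - T)) atTop (𝓝 0)

namespace FrameAux

lemma zero_of_forall_mul_left {y : B} (h : ∀ x : B, x * y = 0) : y = 0 :=
  (CStarRing.star_mul_self_eq_zero_iff y).mp (h (star y))

lemma zero_of_forall_mul_right {y : B} (h : ∀ x : B, y * x = 0) : y = 0 :=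
  (CStarRing.mul_star_self_eq_zero_iff y).mp (h (star y))

lemma fst_mul (T : 𝓜(ℂ, B)) (c d : B) : T.fst (c * d) = T.fst c * d := by
  have h : ∀ x : B, x * (T.fst (c * d) - T.fst c * d) = 0 := by
    intro x
    rw [mul_sub, ← T.central, ← mul_assoc, T.central, mul_assoc, sub_self]
  exact sub_eq_zero.mp (zero_of_forall_mul_left h)

lemma snd_mul (T : 𝓜(ℂ, B)) (c d : B) : T.snd (d * c) = d * T.snd c := by
  have h : ∀ y : B, (T.snd (d * c) - d * T.snd c) * y = 0 := by
    intro y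
    rw [sub_mul, T.central, mul_assoc d (T.snd c) y, T.central, mul_assoc, sub_self]
  exact sub_eq_zero.mp (zero_of_forall_mul_right h)

lemma coe_fst_apply (a d : B) : (a : 𝓜(ℂ, B)).fst d = a * d := by
  rw [DoubleCentralizer.coe_fst]; simp [ContinuousLinearMap.mul_apply']

lemma coe_snd_apply (a d : B) : (a : 𝓜(ℂ, B)).snd d = d * a := by
  rw [DoubleCentralizer.coe_snd]; simp

lemma mul_coe (T : 𝓜(ℂ, B)) (c : B) : T * (c : 𝓜(ℂ, B)) = ((T.fst c : B) : 𝓜(ℂ, B)) := by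
  apply DoubleCentralizer.ext
  apply Prod.ext
  · ext d
    show (T * (c : 𝓜(ℂ, B))).fst d = ((T.fst c : B) : 𝓜(ℂ, B)).fst d
    rw [DoubleCentralizer.mul_fst, coe_fst_apply]
    show T.fst ((c : 𝓜(ℂ, B)).fst d) = T.fst c * d
    rw [coe_fst_apply, fst_mul]
  · ext d
    show (T * (c : 𝓜(ℂ, B))).snd d = ((T.fst c : B) : 𝓜(ℂ, B)).snd d
    rw [DoubleCentralizer.mul_snd, coe_snd_apply]
    show (c : 𝓜(ℂ, B)).snd (T.snd d) = d * T.fst c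
    rw [coe_snd_apply, T.central]

lemma coe_mul (T : 𝓜(ℂ, B)) (c : B) : (c : 𝓜(ℂ, B)) * T = ((T.snd c : B) : 𝓜(ℂ, B)) := by
  apply DoubleCentralizer.ext
  apply Prod.ext
  · ext d
    show ((c : 𝓜(ℂ, B)) * T).fst d = ((T.snd c : B) : 𝓜(ℂ, B)).fst d
    rw [DoubleCentralizer.mul_fst, coe_fst_apply]
    show (c : 𝓜(ℂ, B)).fst (T.fst d) = T.snd c * d
    rw [coe_fst_apply, T.central]
  · ext d
    show ((c : 𝓜(ℂ, B)) * T).snd d = ((T.snd c : B) : 𝓜(ℂ, B)).snd d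
    rw [DoubleCentralizer.mul_snd, coe_snd_apply]
    show T.snd ((c : 𝓜(ℂ, B)).snd d) = d * T.snd c
    rw [coe_snd_apply, snd_mul]

lemma coe_injective' {a : B} (h : (a : 𝓜(ℂ, B)) = 0) : a = 0 := by
  have h2 : ∀ d : B, a * d = 0 := by
    intro d
    have := congrArg (fun X : 𝓜(ℂ, B) => X.fst d) h
    simpa [coe_fst_apply] using this
  exact zero_of_forall_mul_right h2

lemma eq_zero_of_strict (X : 𝓜(ℂ, B)) (h1 : ∀ c : B, X * (c : 𝓜(ℂ, B)) = 0)
    (h2 : ∀ c : B, (c : 𝓜(ℂ, B)) * X = 0) : X = 0 := by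
  apply DoubleCentralizer.ext
  apply Prod.ext
  · ext d
    have := h1 d
    rw [mul_coe] at this
    have h0 : X.fst d = 0 := by
      apply coe_injective'
      simpa using this
    simpa using h0
  · ext d
    have := h2 d
    rw [coe_mul] at this
    have h0 : X.snd d = 0 := by
      apply coe_injective'
      simpa using this
    simpa using h0

lemma theta_eq {J : Type*} (Af Bf L : J → 𝓜(ℂ, B)) (θA θB T : 𝓜(ℂ, B))
    (hθA : HasStrictSum (fun j => L j * Af j) θA)
    (hθB : HasStrictSum (fun j => L j * Bf j) θB)
    (hT : ∀ j, Bf j = Af j * T) : θB = θA * T := by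
  have hsum : ∀ F : Finset J, ∑ j ∈ F, L j * Bf j = (∑ j ∈ F, L j * Af j) * T := by
    intro F
    rw [Finset.sum_mul]
    exact Finset.sum_congr rfl fun j _ => by rw [hT, mul_assoc]
  have key : θB - θA * T = 0 := by
    apply eq_zero_of_strict
    · intro c
      have h1 := (hθA (T.fst c)).1
      have h2 := (hθB c).1
      have hkey : ∀ F : Finset J,
          (θB - θA * T) * (c : 𝓜(ℂ, B)) =
            ((∑ j ∈ F, L j * Af j) - θA) * ((T.fst c : B) : 𝓜(ℂ, B))
              - ((∑ j ∈ F, L j * Bf j) - θB) * (c : 𝓜(ℂ, B)) := by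
        intro F
        rw [← mul_coe, hsum]
        noncomm_ring
      have htend : Tendsto (fun _ : Finset J => (θB - θA * T) * (c : 𝓜(ℂ, B))) atTop (𝓝 0) := by
        have := h1.sub h2
        rw [sub_zero] at this
        exact this.congr fun F => (hkey F).symm
      exact tendsto_nhds_unique tendsto_const_nhds htend
    · intro c
      have h1 := (hθA c).2
      have h2 := (hθB c).2
      have hkey : ∀ F : Finset J,
          (c : 𝓜(ℂ, B)) * (θB - θA * T) =
            ((c : 𝓜(ℂ, B)) * ((∑ j ∈ F, L j * Af j) - θA)) * T
              - (c : 𝓜(ℂ, B)) * ((∑ j ∈ F, L j * Bf j) - θB) := by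
        intro F
        rw [hsum]
        noncomm_ring
      have h1T : Tendsto (fun F : Finset J =>
          ((c : 𝓜(ℂ, B)) * ((∑ j ∈ F, L j * Af j) - θA)) * T) atTop (𝓝 0) := by
        have := h1.mul (tendsto_const_nhds (x := T))
        rwa [zero_mul] at this
      have htend : Tendsto (fun _ : Finset J => (c : 𝓜(ℂ, B)) * (θB - θA * T)) atTop (𝓝 0) := by
        have := h1T.sub h2
        rw [sub_zero] at this
        exact this.congr fun F => (hkey F).symm
      exact tendsto_nhds_unique tendsto_const_nhds htend
  exact sub_eq_zero.mp key

end FrameAux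

/-- Two operator-valued frames `{A_j}` and `{B_j}`, with frame transforms `θ_A, θ_B` built from
a common family of partial isometries `{L_j}` (so `A_j = L_j*θ_A`, `B_j = L_j*θ_B`), frame
operators `D_A = θ_A*θ_A`, `D_B = θ_B*θ_B` (invertible), and frame projections
`P_A = θ_A D_A^{-1}θ_A*`, `P_B = θ_B D_B^{-1}θ_B*`, are right-similar (`B_j = A_j T` for an
invertible `T`) if and only if `P_A = P_B`; moreover any such `T` equals
`D_A^{-1}θ_A*θ_B` (so `T` is uniquely determined). -/
theorem right_similar_iff_same_frame_projection {J : Type*}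
    (Af Bf L : J → 𝓜(ℂ, B)) (E : 𝓜(ℂ, B))
    (hE : IsIdempotentElem E ∧ IsSelfAdjoint E)
    (hL : ∀ i j, star (L i) * L j = if i = j then E else 0)
    (hEA : ∀ j, E * Af j = Af j) (hEB : ∀ j, E * Bf j = Bf j)
    (θA θB DA DB : 𝓜(ℂ, B))
    (hθA : HasStrictSum (fun j => L j * Af j) θA)
    (hθB : HasStrictSum (fun j => L j * Bf j) θB)
    (hDA : star θA * θA = DA) (hDB : star θB * θB = DB)
    (hDAinv : IsUnit DA) (hDBinv : IsUnit DB)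
    (hAf : ∀ j, Af j = star (L j) * θA) (hBf : ∀ j, Bf j = star (L j) * θB) :
    ((∃ T : 𝓜(ℂ, B), IsUnit T ∧ ∀ j, Bf j = Af j * T) ↔
      θA * Ring.inverse DA * star θA = θB * Ring.inverse DB * star θB)
    ∧ ∀ T : 𝓜(ℂ, B), IsUnit T → (∀ j, Bf j = Af j * T) →
        T = Ring.inverse DA * star θA * θB := by
  set iA := Ring.inverse DA with hiA
  set iB := Ring.inverse DB with hiB
  have hiADA : iA * DA = 1 := Ring.inverse_mul_cancel DA hDAinv
  have hDAiA : DA * iA = 1 := Ring.mul_inverse_cancel DA hDAinv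
  have hiBDB : iB * DB = 1 := Ring.inverse_mul_cancel DB hDBinv
  have hDBiB : DB * iB = 1 := Ring.mul_inverse_cancel DB hDBinv
  -- Given a right-similarity T, derive θB = θA * T and the consequences.
  have main : ∀ T : 𝓜(ℂ, B), IsUnit T → (∀ j, Bf j = Af j * T) →
      θB = θA * T ∧ T = iA * star θA * θB := by
    intro T hT hBT
    have hthetaB : θB = θA * T := FrameAux.theta_eq Af Bf L θA θB T hθA hθB hBT
    refine ⟨hthetaB, ?_⟩
    rw [hthetaB, mul_assoc iA, ← mul_assoc (star θA), hDA, ← mul_assoc, hiADA, one_mul]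
  constructor
  · constructor
    · rintro ⟨T, hT, hBT⟩
      obtain ⟨hthetaB, hTeq⟩ := main T hT hBT
      -- DB = star T * DA * T
      have hDBeq : DB = star T * DA * T := by
        rw [← hDB, ← hDA, hthetaB, star_mul]
        noncomm_ring
      -- compute Ring.inverse DB
      have hTstar : IsUnit (star T) := hT.star
      have hiT : Ring.inverse T * T = 1 := Ring.inverse_mul_cancel T hT
      have hTiT : T * Ring.inverse T = 1 := Ring.mul_inverse_cancel T hT
      have hiTs : Ring.inverse (star T) * star T = 1 := Ring.inverse_mul_cancel _ hTstar
      have hTsiTs : star T * Ring.inverse (star T) = 1 := Ring.mul_inverse_cancel _ hTstar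
      set V := Ring.inverse T * iA * Ring.inverse (star T) with hV
      have hDBV : DB * V = 1 := by
        rw [hDBeq, hV]
        calc star T * DA * T * (Ring.inverse T * iA * Ring.inverse (star T))
            = star T * DA * (T * Ring.inverse T) * iA * Ring.inverse (star T) := by noncomm_ring
          _ = star T * (DA * iA) * Ring.inverse (star T) := by rw [hTiT]; noncomm_ring
          _ = star T * Ring.inverse (star T) := by rw [hDAiA]; noncomm_ring
          _ = 1 := hTsiTs
      have hiBV : iB = V := by
        calc iB = iB * (DB * V) := by rw [hDBV, mul_one]
          _ = (iB * DB) * V := by rw [mul_assoc]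
          _ = V := by rw [hiBDB, one_mul]
      rw [hthetaB, hiBV, hV, star_mul]
      symm
      calc θA * T * (Ring.inverse T * iA * Ring.inverse (star T)) * (star T * star θA)
          = θA * (T * Ring.inverse T) * iA * (Ring.inverse (star T) * star T) * star θA := by
            noncomm_ring
        _ = θA * iA * star θA := by rw [hTiT, hiTs]; noncomm_ring
    · intro hP
      -- reverse direction
      set T := iA * star θA * θB with hT
      set T' := iB * star θB * θA with hT'
      have hθBeq : θA * T = θB := by
        rw [hT]
        calc θA * (iA * star θA * θB) = (θA * iA * star θA) * θB := by noncomm_ring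
          _ = (θB * iB * star θB) * θB := by rw [hP]
          _ = θB * (iB * (star θB * θB)) := by noncomm_ring
          _ = θB := by rw [hDB, hiBDB, mul_one]
      have hθAeq : θB * T' = θA := by
        rw [hT']
        calc θB * (iB * star θB * θA) = (θB * iB * star θB) * θA := by noncomm_ring
          _ = (θA * iA * star θA) * θA := by rw [hP]
          _ = θA * (iA * (star θA * θA)) := by noncomm_ring
          _ = θA := by rw [hDA, hiADA, mul_one]
      have hTT' : T * T' = 1 := by
        rw [hT, hT']
        calc iA * star θA * θB * (iB * star θB * θA)
            = iA * (star θA * (θB * iB * star θB * θA)) := by noncomm_ring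
          _ = iA * (star θA * (θA * iA * star θA * θA)) := by rw [show θB * iB * star θB * θA
                = θA * iA * star θA * θA by rw [hP]]
          _ = iA * ((star θA * θA) * iA * (star θA * θA)) := by noncomm_ring
          _ = iA * DA := by rw [hDA, hDAiA, one_mul]
          _ = 1 := hiADA
      have hT'T : T' * T = 1 := by
        rw [hT, hT']
        calc iB * star θB * θA * (iA * star θA * θB)
            = iB * (star θB * (θA * iA * star θA * θB)) := by noncomm_ring
          _ = iB * (star θB * (θB * iB * star θB * θB)) := by rw [show θA * iA * star θA * θB
                = θB * iB * star θB * θB by rw [hP]]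
          _ = iB * ((star θB * θB) * iB * (star θB * θB)) := by noncomm_ring
          _ = iB * DB := by rw [hDB, hDBiB, one_mul]
          _ = 1 := hiBDB
      refine ⟨T, ⟨⟨T, T', hTT', hT'T⟩, rfl⟩, fun j => ?_⟩
      rw [hBf, hAf, mul_assoc, hθBeq]
  · intro T hT hBT
    exact (main T hT hBT).2
end

section
/- Let {A_j} be an operator-valued frame with frame projection P_A, and let P be a projection in M(A⊗K). Then P is Murray–von Neumann equivalent to P_A if and only if there exists an operator-valued frame {B_j} (with the same range space) whose frame projection is P. In particular, if V is a partial isometry with VV* = P and V*V = P_A, then B_j := L_j*Vθ_A defines such a frame with D_B = D_A and θ_B = Vθ_A. -/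
open scoped MultiplierAlgebra
open Filter Topology
open scoped Classical

variable {B : Type*} [NonUnitalCStarAlgebra B]

noncomputable local instance : PartialOrder 𝓜(ℂ, B) := CStarAlgebra.spectralOrder _
local instance : StarOrderedRing 𝓜(ℂ, B) := CStarAlgebra.spectralOrderedRing _

set_option maxHeartbeats 1000000
set_option synthInstance.maxHeartbeats 1000000

/-- `B` is a left ideal in its multiplier algebra. -/
lemma OVF.mul_coe_eq (a : 𝓜(ℂ, B)) (b : B) :
    a * (b : 𝓜(ℂ, B)) = ((a.fst b : B) : 𝓜(ℂ, B)) := by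
  ext x
  · show a.fst (b * x) = a.fst b * x
    have key : ∀ d : B, d * a.fst (b * x) = d * (a.fst b * x) := fun d => by
      rw [← a.central, ← mul_assoc, a.central, mul_assoc]
    have h0 : star (a.fst (b * x) - a.fst b * x) * (a.fst (b * x) - a.fst b * x) = 0 := by
      rw [mul_sub, ← key, ← mul_sub, sub_self, mul_zero]
    have := (CStarRing.star_mul_self_eq_zero_iff _).mp h0
    rwa [sub_eq_zero] at this
  · show a.snd x * b = x * a.fst b
    exact a.central x b

/-- `B` is a right ideal in its multiplier algebra. -/
lemma OVF.coe_mul_eq (a : 𝓜(ℂ, B)) (b : B) :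
    (b : 𝓜(ℂ, B)) * a = ((a.snd b : B) : 𝓜(ℂ, B)) := by
  ext x
  · show b * a.fst x = a.snd b * x
    exact (a.central b x).symm
  · show a.snd (x * b) = x * a.snd b
    have key : ∀ d : B, a.snd (x * b) * d = (x * a.snd b) * d := fun d => by
      rw [a.central, mul_assoc, ← a.central, mul_assoc]
    have h0 : (a.snd (x * b) - x * a.snd b) * star (a.snd (x * b) - x * a.snd b) = 0 := by
      rw [sub_mul, ← key, ← sub_mul, sub_self, zero_mul]
    have := (CStarRing.mul_star_self_eq_zero_iff _).mp h0
    rwa [sub_eq_zero] at this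

/-- Strict sums are stable under two-sided multiplication by fixed multipliers. -/
lemma OVF.hasStrictSum_conj {J : Type*} {g : J → 𝓜(ℂ, B)} {T : 𝓜(ℂ, B)}
    (h : HasStrictSum g T) (x y : 𝓜(ℂ, B)) :
    HasStrictSum (fun j => x * g j * y) (x * T * y) := by
  intro b
  obtain ⟨c, hc⟩ : ∃ c : B, y * (b : 𝓜(ℂ, B)) = c := ⟨_, OVF.mul_coe_eq y b⟩
  obtain ⟨c', hc'⟩ : ∃ c' : B, (b : 𝓜(ℂ, B)) * x = c' := ⟨_, OVF.coe_mul_eq x b⟩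
  constructor
  · have h1 := (h c).1.const_mul x
    rw [mul_zero] at h1
    refine h1.congr fun F => ?_
    simp only [mul_sub, sub_mul, Finset.sum_mul, Finset.mul_sum, mul_assoc, hc]
  · have h1 := (h c').2.mul_const y
    rw [zero_mul] at h1
    refine h1.congr fun F => ?_
    have hb : ∀ z : 𝓜(ℂ, B), (b : 𝓜(ℂ, B)) * (x * z) = (c' : 𝓜(ℂ, B)) * z := fun z => by
      rw [← mul_assoc, hc']
    simp only [mul_sub, sub_mul, Finset.sum_mul, Finset.mul_sum, mul_assoc, hb]

/-- If `a*a = p` with `p` a projection, then `a p = a`. -/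
lemma OVF.mul_proj (a p : 𝓜(ℂ, B)) (h : star a * a = p)
    (hp : IsIdempotentElem p) (hps : IsSelfAdjoint p) : a * p = a := by
  have hpp : p * p = p := hp
  have h0 : star (a * p - a) * (a * p - a) = 0 := by
    have expand : star (a * p - a) * (a * p - a)
        = p * (star a * a) * p - p * (star a * a) - (star a * a) * p + star a * a := by
      rw [star_sub, star_mul, hps.star_eq]; noncomm_ring
    rw [expand, h]
    simp only [hpp]
    abel
  have := (CStarRing.star_mul_self_eq_zero_iff _).mp h0
  rwa [sub_eq_zero] at this

lemma OVF.isUnit_of_left_right {M : Type*} [Monoid M] {a b c : M}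
    (h1 : a * b = 1) (h2 : c * a = 1) : IsUnit a := by
  have hbc : b = c := by rw [← one_mul b, ← h2, mul_assoc, h1, mul_one]
  exact ⟨⟨a, b, h1, hbc ▸ h2⟩, rfl⟩

/-- An inverse square root package for a positive invertible multiplier. -/
lemma OVF.inv_sqrt (D : 𝓜(ℂ, B)) (hinv : IsUnit D) (hpos : (0 : 𝓜(ℂ, B)) ≤ D) :
    ∃ t : 𝓜(ℂ, B), star t = t ∧ t * D * t = 1 ∧ t * t = Ring.inverse D := by
  set s := CFC.sqrt D with hs_def
  have hss : s * s = D := CFC.sqrt_mul_sqrt_self D hpos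
  have hsnn : (0 : 𝓜(ℂ, B)) ≤ s := CFC.sqrt_nonneg D
  have hssa : IsSelfAdjoint s := IsSelfAdjoint.of_nonneg hsnn
  have hsu : IsUnit s := by
    refine OVF.isUnit_of_left_right (b := s * ↑hinv.unit⁻¹) (c := ↑hinv.unit⁻¹ * s) ?_ ?_
    · rw [← mul_assoc, hss]; exact hinv.mul_val_inv
    · rw [mul_assoc, hss]; exact hinv.val_inv_mul
  refine ⟨Ring.inverse s, ?_, ?_, ?_⟩
  · rw [← Ring.inverse_star, hssa.star_eq]
  · rw [← hss, ← mul_assoc (Ring.inverse s) s s, Ring.inverse_mul_cancel s hsu, one_mul,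
      Ring.mul_inverse_cancel s hsu]
  · have hD : D * (Ring.inverse s * Ring.inverse s) = 1 := by
      rw [← hss, mul_assoc, ← mul_assoc s (Ring.inverse s) (Ring.inverse s),
        Ring.mul_inverse_cancel s hsu, one_mul, Ring.mul_inverse_cancel s hsu]
    calc Ring.inverse s * Ring.inverse s
        = (Ring.inverse D * D) * (Ring.inverse s * Ring.inverse s) := by
          rw [Ring.inverse_mul_cancel D hinv, one_mul]
      _ = Ring.inverse D * (D * (Ring.inverse s * Ring.inverse s)) := by rw [mul_assoc]
      _ = Ring.inverse D := by rw [hD, mul_one]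

/-- Let `{A_j}` be an operator-valued frame with frame transform `θ_A` (built from partial
isometries `L_j` with `L_i*L_j = δ_{ij}E` and `Σ_j L_jL_j* = 1` strictly), invertible frame
operator `D_A = θ_A*θ_A` and frame projection `P_A = θ_A D_A^{-1}θ_A*`, and let `P` be a
projection in `M(A⊗K)`.  Then `P` is Murray-von Neumann equivalent to `P_A` if and only if
there is an operator-valued frame `{B_j}` (with the same range space, i.e. `E B_j = B_j`)
whose frame projection is `P`.  In particular, if `VV* = P` and `V*V = P_A`, then
`B_j := L_j* (V θ_A)` defines such a frame, with `D_B = D_A` and `θ_B = V θ_A`. -/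
theorem equivalent_iff_exists_frame {J : Type*}
    (Af L : J → 𝓜(ℂ, B)) (E : 𝓜(ℂ, B))
    (hE : IsIdempotentElem E ∧ IsSelfAdjoint E)
    (hL : ∀ i j, star (L i) * L j = if i = j then E else 0)
    (hdecomp : HasStrictSum (fun j => L j * star (L j)) (1 : 𝓜(ℂ, B)))
    (hEA : ∀ j, E * Af j = Af j)
    (θA DA : 𝓜(ℂ, B))
    (hθA : HasStrictSum (fun j => L j * Af j) θA)
    (hDA : star θA * θA = DA) (hDAinv : IsUnit DA) (hDApos : (0 : 𝓜(ℂ, B)) ≤ DA)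
    (hAf : ∀ j, Af j = star (L j) * θA)
    (P : 𝓜(ℂ, B)) (hP : IsIdempotentElem P ∧ IsSelfAdjoint P) :
    ((∃ V : 𝓜(ℂ, B), V * star V = P ∧ star V * V = θA * Ring.inverse DA * star θA) ↔
      (∃ (Bf : J → 𝓜(ℂ, B)) (θB DB : 𝓜(ℂ, B)),
        (∀ j, E * Bf j = Bf j) ∧
        HasStrictSum (fun j => star (Bf j) * Bf j) DB ∧ IsUnit DB ∧ (0 : 𝓜(ℂ, B)) ≤ DB ∧
        HasStrictSum (fun j => L j * Bf j) θB ∧ star θB * θB = DB ∧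
        θB * Ring.inverse DB * star θB = P))
    ∧ ∀ V : 𝓜(ℂ, B), V * star V = P → star V * V = θA * Ring.inverse DA * star θA →
        HasStrictSum (fun j => star (star (L j) * (V * θA)) * (star (L j) * (V * θA))) DA
        ∧ HasStrictSum (fun j => L j * (star (L j) * (V * θA))) (V * θA) := by
  have hLE : ∀ j, L j * E = L j := fun j =>
    OVF.mul_proj (L j) E (by simpa using hL j j) hE.1 hE.2
  have key : ∀ V : 𝓜(ℂ, B), V * star V = P → star V * V = θA * Ring.inverse DA * star θA →
      star (V * θA) * (V * θA) = DA ∧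
      HasStrictSum (fun j => star (star (L j) * (V * θA)) * (star (L j) * (V * θA))) DA ∧
      HasStrictSum (fun j => L j * (star (L j) * (V * θA))) (V * θA) := by
    intro V hV1 hV2
    have hVθ : star (V * θA) * (V * θA) = DA := by
      rw [star_mul]
      simp only [← mul_assoc]
      rw [mul_assoc (star θA) (star V) V, hV2]
      simp only [← mul_assoc]
      rw [hDA, Ring.mul_inverse_cancel DA hDAinv, one_mul, hDA]
    refine ⟨hVθ, ?_, ?_⟩
    · have h1 := OVF.hasStrictSum_conj hdecomp (star (V * θA)) (V * θA)
      rw [mul_one, hVθ] at h1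
      have hfun : (fun j => star (star (L j) * (V * θA)) * (star (L j) * (V * θA)))
          = fun j => star (V * θA) * (L j * star (L j)) * (V * θA) := by
        funext j; simp only [star_mul, star_star, mul_assoc]
      rw [hfun]
      exact h1
    · have h1 := OVF.hasStrictSum_conj hdecomp 1 (V * θA)
      simp only [one_mul] at h1
      have hfun : (fun j => L j * (star (L j) * (V * θA)))
          = fun j => L j * star (L j) * (V * θA) := by
        funext j; rw [mul_assoc]
      rw [hfun]
      exact h1
  constructor
  · constructor
    · rintro ⟨V, hV1, hV2⟩
      obtain ⟨hVθ, hsum1, hsum2⟩ := key V hV1 hV2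
      refine ⟨fun j => star (L j) * (V * θA), V * θA, DA, ?_, hsum1, hDAinv, hDApos, hsum2,
        hVθ, ?_⟩
      · intro j
        have hEL : E * star (L j) = star (L j) := by
          calc E * star (L j) = star (L j * E) := by rw [star_mul, hE.2.star_eq]
            _ = star (L j) := by rw [hLE]
        rw [← mul_assoc, hEL]
      · rw [star_mul]
        calc V * θA * Ring.inverse DA * (star θA * star V)
            = V * (θA * Ring.inverse DA * star θA) * star V := by simp only [mul_assoc]
          _ = V * (star V * V) * star V := by rw [hV2]
          _ = (V * star V) * (V * star V) := by simp only [mul_assoc]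
          _ = P * P := by rw [hV1]
          _ = P := hP.1
    · rintro ⟨Bf, θB, DB, hBE, hBDsum, hDBinv, hDBpos, hBθsum, hθBDB, hproj⟩
      obtain ⟨tA, htAs, htA1, htA2⟩ := OVF.inv_sqrt DA hDAinv hDApos
      obtain ⟨tB, htBs, htB1, htB2⟩ := OVF.inv_sqrt DB hDBinv hDBpos
      have hstar : star (θB * tB * tA * star θA) = θA * tA * tB * star θB := by
        simp only [star_mul, star_star, htAs, htBs, mul_assoc]
      have hA : ∀ z : 𝓜(ℂ, B), tA * (star θA * (θA * (tA * z))) = z := fun z => by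
        rw [show star θA * (θA * (tA * z)) = DA * (tA * z) from by rw [← mul_assoc, hDA]]
        rw [show tA * (DA * (tA * z)) = (tA * DA * tA) * z from by simp only [mul_assoc]]
        rw [htA1, one_mul]
      have hB : ∀ z : 𝓜(ℂ, B), tB * (star θB * (θB * (tB * z))) = z := fun z => by
        rw [show star θB * (θB * (tB * z)) = DB * (tB * z) from by rw [← mul_assoc, hθBDB]]
        rw [show tB * (DB * (tB * z)) = (tB * DB * tB) * z from by simp only [mul_assoc]]
        rw [htB1, one_mul]
      refine ⟨θB * tB * tA * star θA, ?_, ?_⟩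
      · rw [hstar]
        simp only [mul_assoc]
        rw [hA (tB * star θB)]
        rw [show tB * (tB * star θB) = Ring.inverse DB * star θB from by rw [← mul_assoc, htB2]]
        rw [← mul_assoc, hproj]
      · rw [hstar]
        simp only [mul_assoc]
        rw [hB (tA * star θA)]
        rw [show tA * (tA * star θA) = Ring.inverse DA * star θA from by rw [← mul_assoc, htA2]]
  · intro V hV1 hV2
    exact (key V hV1 hV2).2
end
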